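/- Let H_A and H_B be finite-dimensional complex inner product spaces, Y ⊆ H_A ⊗ H_B a subspace, and ε > 0. Let ρ_A = tr_B(P_Y) and let P_+ = 1_{[ε,∞)}(ρ_A) be the spectral projection of ρ_A onto eigenvalues in [ε,∞). Then rank(P_+) ≤ (dim Y)/ε. Consequently the trimmed subspace trim_ε^A(Y) := (P_+ ⊗ id_B)(Y) is contained in V ⊗ H_B for a subspace V ⊆ H_A with dim V ≤ (dim Y)/ε. -/

import Mathlib

noncomputable section

/-- Concrete model of the Hilbert tensor product: the tensor `a ⊗ b`. -/
def tmul {ι κ : Type*} [Fintype ι] [Fintype κ]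
    (a : EuclideanSpace ℂ ι) (b : EuclideanSpace ℂ κ) : EuclideanSpace ℂ (ι × κ) :=
  WithLp.toLp 2 (fun p => a p.1 * b p.2)

/-- The subspace `V ⊗ H₂`: the span of the simple tensors `v ⊗ b` with `v ∈ V`. -/
def extSub {ι κ : Type*} [Fintype ι] [Fintype κ]
    (V : Submodule ℂ (EuclideanSpace ℂ ι)) : Submodule ℂ (EuclideanSpace ℂ (ι × κ)) :=
  Submodule.span ℂ {x | ∃ v ∈ V, ∃ b : EuclideanSpace ℂ κ, x = tmul v b}

/-- The operator `X ⊗ Y` on the concrete tensor product. -/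
def kron {ι κ : Type*} [Fintype ι] [Fintype κ] [DecidableEq ι] [DecidableEq κ]
    (X : EuclideanSpace ℂ ι →ₗ[ℂ] EuclideanSpace ℂ ι)
    (Y : EuclideanSpace ℂ κ →ₗ[ℂ] EuclideanSpace ℂ κ) :
    EuclideanSpace ℂ (ι × κ) →ₗ[ℂ] EuclideanSpace ℂ (ι × κ) :=
  Matrix.toEuclideanLin
    (Matrix.kroneckerMap (· * ·) (Matrix.toEuclideanLin.symm X) (Matrix.toEuclideanLin.symm Y))

/-- The orthogonal projection onto a subspace, as an operator on the ambient space. -/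
def projOf {E : Type*} [NormedAddCommGroup E] [InnerProductSpace ℂ E] [FiniteDimensional ℂ E]
    (S : Submodule ℂ E) : E →L[ℂ] E :=
  S.subtypeL.comp (S.orthogonalProjection)

/-- The span of the eigenvectors of `ρ` whose eigenvalue is a real number in the set `I`. -/
def specSub {E : Type*} [NormedAddCommGroup E] [InnerProductSpace ℂ E] [FiniteDimensional ℂ E]
    (ρ : E →ₗ[ℂ] E) (I : Set ℝ) : Submodule ℂ E :=
  ⨆ c : I, Module.End.eigenspace ρ ((c : ℝ) : ℂ)

/-! ### Auxiliary lemmas -/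

open scoped Matrix Kronecker

local notation "⟪" x ", " y "⟫" => @inner ℂ _ _ x y

lemma euc_apply {ι κ : Type*} [Fintype ι] [Fintype κ] [DecidableEq ι] [DecidableEq κ]
    (M : Matrix ι κ ℂ) (x : EuclideanSpace ℂ κ) (i : ι) :
    Matrix.toEuclideanLin M x i = ∑ j, M i j * x j := by
  simp [Matrix.toEuclideanLin_apply, Matrix.mulVec, dotProduct]

lemma lin_apply {ι : Type*} [Fintype ι] [DecidableEq ι]
    (X : EuclideanSpace ℂ ι →ₗ[ℂ] EuclideanSpace ℂ ι) (x : EuclideanSpace ℂ ι) (i : ι) :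
    X x i = ∑ j, Matrix.toEuclideanLin.symm X i j * x j := by
  conv_lhs => rw [← Matrix.toEuclideanLin.apply_symm_apply X]
  exact euc_apply _ _ _

lemma kron_tmul {ι κ : Type*} [Fintype ι] [Fintype κ] [DecidableEq ι] [DecidableEq κ]
    (X : EuclideanSpace ℂ ι →ₗ[ℂ] EuclideanSpace ℂ ι)
    (Y : EuclideanSpace ℂ κ →ₗ[ℂ] EuclideanSpace ℂ κ)
    (a : EuclideanSpace ℂ ι) (b : EuclideanSpace ℂ κ) :
    kron X Y (tmul a b) = tmul (X a) (Y b) := by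
  ext p
  have h0 : kron X Y (tmul a b) p = ∑ q : ι × κ,
      Matrix.kroneckerMap (· * ·) (Matrix.toEuclideanLin.symm X) (Matrix.toEuclideanLin.symm Y) p q
        * tmul a b q := euc_apply _ _ _
  refine h0.trans ?_
  show _ = X a p.1 * Y b p.2
  rw [lin_apply X a p.1, lin_apply Y b p.2, Finset.sum_mul_sum, Fintype.sum_prod_type]
  congr 1; funext k; congr 1; funext l
  show Matrix.toEuclideanLin.symm X p.1 k * Matrix.toEuclideanLin.symm Y p.2 l * tmul a b (k, l) = _
  show _ * (a k * b l) = _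
  ring

lemma tmul_single {ι κ : Type*} [Fintype ι] [Fintype κ] [DecidableEq ι] [DecidableEq κ]
    (p : ι × κ) :
    tmul (EuclideanSpace.single p.1 (1:ℂ)) (EuclideanSpace.single p.2 (1:ℂ))
      = EuclideanSpace.single p (1:ℂ) := by
  ext q
  show EuclideanSpace.single p.1 (1:ℂ) q.1 * EuclideanSpace.single p.2 (1:ℂ) q.2
    = EuclideanSpace.single p (1:ℂ) q
  rcases p with ⟨k, l⟩; rcases q with ⟨i, j⟩
  simp only [EuclideanSpace.single_apply, Prod.mk.injEq]
  by_cases h1 : i = k <;> by_cases h2 : j = l <;> simp [h1, h2]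

lemma euc_decomp {ι κ : Type*} [Fintype ι] [Fintype κ] [DecidableEq ι] [DecidableEq κ]
    (x : EuclideanSpace ℂ (ι × κ)) :
    x = ∑ p : ι × κ, x p • tmul (EuclideanSpace.single p.1 1) (EuclideanSpace.single p.2 1) := by
  simp_rw [tmul_single]
  ext q
  rw [WithLp.ofLp_sum, Finset.sum_apply]
  simp [EuclideanSpace.single_apply]

lemma euc_mul {ι : Type*} [Fintype ι] [DecidableEq ι] (M N : Matrix ι ι ℂ) :
    Matrix.toEuclideanLin (M * N) = Matrix.toEuclideanLin M ∘ₗ Matrix.toEuclideanLin N := by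
  apply LinearMap.ext; intro x
  simp [Matrix.toEuclideanLin_apply, Matrix.mulVec_mulVec]

lemma euc_symm_id {ι : Type*} [Fintype ι] [DecidableEq ι] :
    Matrix.toEuclideanLin.symm (LinearMap.id : EuclideanSpace ℂ ι →ₗ[ℂ] EuclideanSpace ℂ ι) = 1 := by
  apply Matrix.toEuclideanLin.injective
  rw [Matrix.toEuclideanLin.apply_symm_apply]
  apply LinearMap.ext; intro x
  simp [Matrix.toEuclideanLin_apply, Matrix.one_mulVec]

lemma kron_conjTranspose {ι κ : Type*} (A : Matrix ι ι ℂ) (B : Matrix κ κ ℂ) :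
    (Matrix.kroneckerMap (· * ·) A B)ᴴ = Matrix.kroneckerMap (· * ·) Aᴴ Bᴴ := by
  ext p q
  simp [Matrix.conjTranspose_apply, Matrix.kroneckerMap_apply, mul_comm]

lemma projOf_mem {E : Type*} [NormedAddCommGroup E] [InnerProductSpace ℂ E]
    [FiniteDimensional ℂ E] {S : Submodule ℂ E} {x : E} (hx : x ∈ S) : projOf S x = x := by
  simp only [projOf, ContinuousLinearMap.comp_apply, Submodule.subtypeL_apply]
  rw [show x = ((⟨x, hx⟩ : S) : E) from rfl, Submodule.orthogonalProjection_mem_subspace_eq_self]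

lemma projOf_orth {E : Type*} [NormedAddCommGroup E] [InnerProductSpace ℂ E]
    [FiniteDimensional ℂ E] {S : Submodule ℂ E} {x : E} (hx : x ∈ Sᗮ) : projOf S x = 0 := by
  simp only [projOf, ContinuousLinearMap.comp_apply, Submodule.subtypeL_apply]
  rw [Submodule.orthogonalProjectionOnto_apply_of_mem_orthogonal hx]
  rfl

lemma projOf_mem_self {E : Type*} [NormedAddCommGroup E] [InnerProductSpace ℂ E]
    [FiniteDimensional ℂ E] (S : Submodule ℂ E) (x : E) : projOf S x ∈ S := by
  simp only [projOf, ContinuousLinearMap.comp_apply, Submodule.subtypeL_apply]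
  exact (S.orthogonalProjectionOnto x).2

lemma projOf_idem {E : Type*} [NormedAddCommGroup E] [InnerProductSpace ℂ E]
    [FiniteDimensional ℂ E] (S : Submodule ℂ E) :
    (projOf S).toLinearMap ∘ₗ (projOf S).toLinearMap = (projOf S).toLinearMap := by
  apply LinearMap.ext; intro x
  exact projOf_mem (projOf_mem_self S x)

lemma projOf_isSymmetric {E : Type*} [NormedAddCommGroup E] [InnerProductSpace ℂ E]
    [FiniteDimensional ℂ E] (S : Submodule ℂ E) :
    LinearMap.IsSymmetric (projOf S).toLinearMap :=
  S.starProjection_isSymmetric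

lemma stepA {E : Type*} [NormedAddCommGroup E] [InnerProductSpace ℂ E] [FiniteDimensional ℂ E]
    (g : E →ₗ[ℂ] E) (ε : ℝ) :
    ε * (Module.finrank ℂ (specSub g (Set.Ici ε)) : ℝ) ≤
      (LinearMap.trace ℂ E (g ∘ₗ (projOf (specSub g (Set.Ici ε))).toLinearMap)).re := by
  classical
  set Ω : Set E := {x | ∃ c : ℝ, ε ≤ c ∧ g x = (c : ℂ) • x} with hΩ
  have hΩsub : Ω ⊆ (specSub g (Set.Ici ε) : Set E) := by
    rintro x ⟨c, hc, hx⟩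
    have hx' : x ∈ Module.End.eigenspace g ((c : ℝ) : ℂ) := Module.End.mem_eigenspace_iff.2 hx
    exact (le_iSup (fun c : (Set.Ici ε) => Module.End.eigenspace g (((c : ℝ) : ℂ)))
      (⟨c, hc⟩ : Set.Ici ε)) hx'
  have hspan : Submodule.span ℂ Ω = specSub g (Set.Ici ε) := by
    apply le_antisymm (Submodule.span_le.2 hΩsub)
    apply iSup_le
    rintro ⟨c, hc⟩ x hx
    exact Submodule.subset_span ⟨c, hc, Module.End.mem_eigenspace_iff.1 hx⟩
  obtain ⟨b, hbΩ, hbspan, hbli⟩ := exists_linearIndependent ℂ Ω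
  have hbfin : b.Finite := hbli.setFinite
  haveI : Fintype b := hbfin.fintype
  have hrange : Set.range ((↑) : b → E) = b := Subtype.range_coe
  set W : Submodule ℂ E := Submodule.span ℂ (Set.range ((↑) : b → E)) with hWdef
  have hWV : W = specSub g (Set.Ici ε) := by rw [hWdef, hrange, hbspan, hspan]
  have hbW : ∀ i : b, (i : E) ∈ W := fun i =>
    Submodule.subset_span (Set.mem_range_self i)
  choose μ hμ₁ hμ₂ using fun i : b => hbΩ i.2
  have hcompl : IsCompl W Wᗮ := W.isCompl_orthogonal_of_hasOrthogonalProjection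
  set bW : Module.Basis b ℂ W := Module.Basis.span hbli with hbWdef
  set bP := Module.finBasis ℂ (↥Wᗮ) with hbPdef
  set B : Module.Basis (b ⊕ Fin (Module.finrank ℂ ↥Wᗮ)) ℂ E :=
    (bW.prod bP).map (Submodule.prodEquivOfIsCompl W Wᗮ hcompl) with hBdef
  have hBl : ∀ i : b, B (Sum.inl i) = (i : E) := by
    intro i
    rw [hBdef, Module.Basis.map_apply, Module.Basis.prod_apply, Submodule.coe_prodEquivOfIsCompl']
    simp only [Sum.elim_inl, Function.comp_apply, LinearMap.coe_inl, ZeroMemClass.coe_zero,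
      add_zero]
    exact congrArg Subtype.val (Module.Basis.span_apply hbli i)
  have hBr : ∀ j, B (Sum.inr j) = ((bP j : E)) := by
    intro j
    rw [hBdef, Module.Basis.map_apply, Module.Basis.prod_apply, Submodule.coe_prodEquivOfIsCompl']
    simp only [Sum.elim_inr, Function.comp_apply, LinearMap.coe_inr, ZeroMemClass.coe_zero,
      zero_add]
  rw [← hWV]
  set f := g ∘ₗ (projOf W).toLinearMap with hf
  rw [LinearMap.trace_eq_matrix_trace ℂ B f, Matrix.trace]
  have hdiag : ∀ p, (LinearMap.toMatrix B B f).diag p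
      = Sum.elim (fun i : b => ((μ i : ℝ) : ℂ)) (fun _ => (0 : ℂ)) p := by
    rintro (i | j)
    · have hfi : f (B (Sum.inl i)) = (μ i : ℂ) • B (Sum.inl i) := by
        rw [hBl, hf]
        simp only [LinearMap.comp_apply, ContinuousLinearMap.coe_coe]
        rw [projOf_mem (hbW i), hμ₂ i]
      simp only [Matrix.diag_apply, LinearMap.toMatrix_apply, hfi, map_smul]
      rw [B.repr_self]
      simp
    · have hfj : f (B (Sum.inr j)) = 0 := by
        rw [hBr, hf]
        simp only [LinearMap.comp_apply, ContinuousLinearMap.coe_coe]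
        rw [projOf_orth (bP j).2, map_zero]
      simp [Matrix.diag_apply, LinearMap.toMatrix_apply, hfj]
  rw [Finset.sum_congr rfl fun p _ => hdiag p]
  rw [Fintype.sum_sum_type]
  simp only [Sum.elim_inl, Sum.elim_inr, Finset.sum_const, smul_zero, add_zero]
  rw [Complex.re_sum]
  simp only [Complex.ofReal_re]
  have hcard : Module.finrank ℂ W = Fintype.card b := finrank_span_eq_card hbli
  rw [hcard]
  calc ε * (Fintype.card b : ℝ) = ∑ _i : b, ε := by
        rw [Finset.sum_const, nsmul_eq_mul, Finset.card_univ, mul_comm]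
    _ ≤ ∑ i : b, μ i := Finset.sum_le_sum fun i _ => hμ₁ i

lemma stepC {E : Type*} [NormedAddCommGroup E] [InnerProductSpace ℂ E] [FiniteDimensional ℂ E]
    (Y : Submodule ℂ E) (Q : E →ₗ[ℂ] E) (hsym : LinearMap.IsSymmetric Q)
    (hQ2 : Q ∘ₗ Q = Q) :
    (LinearMap.trace ℂ E ((projOf Y).toLinearMap ∘ₗ Q)).re ≤ (Module.finrank ℂ Y : ℝ) := by
  classical
  have hQQ' : ∀ v : E, Q (Q v) = Q v := fun v => LinearMap.ext_iff.1 hQ2 v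
  have hinner : ∀ v : E, ⟪v, Q v⟫ = ⟪Q v, Q v⟫ := fun v =>
    ((hsym v (Q v)).trans (by rw [hQQ'])).symm
  have hnorm : ∀ v : E, ‖Q v‖ ≤ ‖v‖ := by
    intro v
    have horth : ⟪Q v, v - Q v⟫ = 0 := by
      rw [inner_sub_right, hsym v v, hinner v, sub_self]
    have hdec : ‖Q v + (v - Q v)‖ * ‖Q v + (v - Q v)‖ = ‖Q v‖ * ‖Q v‖ + ‖v - Q v‖ * ‖v - Q v‖ :=
      norm_add_sq_eq_norm_sq_add_norm_sq_of_inner_eq_zero _ _ horth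
    rw [add_sub_cancel] at hdec
    nlinarith [norm_nonneg (v - Q v), norm_nonneg (Q v), norm_nonneg v]
  have hterm : ∀ v : E, ⟪v, Q v⟫.re ≤ ‖v‖ ^ 2 := by
    intro v
    rw [hinner v, inner_self_eq_norm_sq_to_K (𝕜 := ℂ)]
    have h2 : ‖Q v‖ ^ 2 ≤ ‖v‖ ^ 2 := by
      nlinarith [hnorm v, norm_nonneg (Q v), norm_nonneg v]
    calc ((‖Q v‖ : ℂ) ^ 2).re = ‖Q v‖ ^ 2 := by norm_cast
      _ ≤ ‖v‖ ^ 2 := h2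
  set projL : E →ₗ[ℂ] Y := (Y.orthogonalProjection : E →L[ℂ] Y).toLinearMap with hprojL
  have hsplit : (projOf Y).toLinearMap ∘ₗ Q = Y.subtype ∘ₗ (projL ∘ₗ Q) := rfl
  rw [hsplit, LinearMap.trace_comp_comm' (projL ∘ₗ Q) Y.subtype]
  set gY : Y →ₗ[ℂ] Y := (projL ∘ₗ Q) ∘ₗ Y.subtype with hgY
  set onb := stdOrthonormalBasis ℂ Y with honb
  rw [LinearMap.trace_eq_matrix_trace ℂ onb.toBasis gY, Matrix.trace]
  rw [Complex.re_sum]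
  have hentry : ∀ i, ((LinearMap.toMatrix onb.toBasis onb.toBasis gY).diag i).re
      ≤ 1 := by
    intro i
    have h1 : (LinearMap.toMatrix onb.toBasis onb.toBasis gY).diag i
        = ⟪((onb i : E)), Q (onb i : E)⟫ := by
      rw [Matrix.diag_apply, LinearMap.toMatrix_apply, OrthonormalBasis.coe_toBasis,
        OrthonormalBasis.coe_toBasis_repr_apply, OrthonormalBasis.repr_apply_apply]
      show ⟪onb i, Y.orthogonalProjection (Q (onb i : E))⟫ = _
      exact Submodule.inner_orthogonalProjectionOnto_eq_of_mem_left (K := Y) (onb i) (Q (onb i : E))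
    rw [h1]
    have := hterm ((onb i : E))
    have hn : ‖(onb i : E)‖ = 1 := by
      have := onb.orthonormal.1 i
      exact this
    rw [hn] at this
    simpa using this
  calc ∑ i, ((LinearMap.toMatrix onb.toBasis onb.toBasis gY).diag i).re
      ≤ ∑ _i : Fin (Module.finrank ℂ Y), (1 : ℝ) := Finset.sum_le_sum fun i _ => hentry i
    _ = (Module.finrank ℂ Y : ℝ) := by simp

lemma kron_proj_symm {ι κ : Type*} [Fintype ι] [Fintype κ] [DecidableEq ι] [DecidableEq κ]
    (V : Submodule ℂ (EuclideanSpace ℂ ι)) :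
    LinearMap.adjoint (kron (κ := κ) (projOf V).toLinearMap LinearMap.id)
      = kron (projOf V).toLinearMap LinearMap.id := by
  have hPadj : LinearMap.adjoint (projOf V).toLinearMap = (projOf V).toLinearMap :=
    LinearMap.isSelfAdjoint_iff'.1
      ((LinearMap.isSymmetric_iff_isSelfAdjoint _).1 (projOf_isSymmetric V))
  have hMp : (Matrix.toEuclideanLin.symm (projOf V).toLinearMap)ᴴ
      = Matrix.toEuclideanLin.symm (projOf V).toLinearMap := by
    apply Matrix.toEuclideanLin.injective
    rw [Matrix.toEuclideanLin_conjTranspose_eq_adjoint, Matrix.toEuclideanLin.apply_symm_apply,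
      hPadj]
  have h1 : kron (κ := κ) (projOf V).toLinearMap LinearMap.id
      = Matrix.toEuclideanLin (Matrix.kroneckerMap (· * ·)
          (Matrix.toEuclideanLin.symm (projOf V).toLinearMap) (1 : Matrix κ κ ℂ)) := by
    unfold kron
    rw [euc_symm_id]
  rw [h1, ← Matrix.toEuclideanLin_conjTranspose_eq_adjoint, kron_conjTranspose, hMp,
    Matrix.conjTranspose_one]

lemma kron_proj_idem {ι κ : Type*} [Fintype ι] [Fintype κ] [DecidableEq ι] [DecidableEq κ]
    (V : Submodule ℂ (EuclideanSpace ℂ ι)) :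
    (kron (κ := κ) (projOf V).toLinearMap LinearMap.id)
        ∘ₗ kron (projOf V).toLinearMap LinearMap.id
      = kron (projOf V).toLinearMap LinearMap.id := by
  have hMp : (Matrix.toEuclideanLin.symm (projOf V).toLinearMap)
        * (Matrix.toEuclideanLin.symm (projOf V).toLinearMap)
      = Matrix.toEuclideanLin.symm (projOf V).toLinearMap := by
    apply Matrix.toEuclideanLin.injective
    rw [euc_mul, Matrix.toEuclideanLin.apply_symm_apply]
    exact projOf_idem V
  have h1 : kron (κ := κ) (projOf V).toLinearMap LinearMap.id
      = Matrix.toEuclideanLin (Matrix.kroneckerMap (· * ·)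
          (Matrix.toEuclideanLin.symm (projOf V).toLinearMap) (1 : Matrix κ κ ℂ)) := by
    unfold kron
    rw [euc_symm_id]
  rw [h1, ← euc_mul, ← Matrix.mul_kronecker_mul, hMp, one_mul]

lemma kron_proj_mem {ι κ : Type*} [Fintype ι] [Fintype κ] [DecidableEq ι] [DecidableEq κ]
    (V : Submodule ℂ (EuclideanSpace ℂ ι)) (x : EuclideanSpace ℂ (ι × κ)) :
    kron (projOf V).toLinearMap LinearMap.id x ∈ extSub (κ := κ) V := by
  rw [euc_decomp x, map_sum]
  apply Submodule.sum_mem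
  intro p _
  rw [map_smul]
  apply Submodule.smul_mem
  rw [kron_tmul]
  exact Submodule.subset_span
    ⟨projOf V (EuclideanSpace.single p.1 1), projOf_mem_self V _,
      EuclideanSpace.single p.2 1, rfl⟩

/-- Rank bound for trimming: if `ρ_A = tr_B(P_Y)` and `P₊ = 1_{[ε,∞)}(ρ_A)`, then
`rank P₊ ≤ dim Y / ε`, and consequently the trimmed subspace `(P₊ ⊗ id_B)(Y)` is contained
in `V ⊗ H_B` for a subspace `V ⊆ H_A` with `dim V ≤ dim Y / ε`. -/
theorem trimmed_rank_bound
    {ιA ιB : Type*} [Fintype ιA] [Fintype ιB] [DecidableEq ιA] [DecidableEq ιB]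
    (Y : Submodule ℂ (EuclideanSpace ℂ (ιA × ιB)))
    (ρA : EuclideanSpace ℂ ιA →ₗ[ℂ] EuclideanSpace ℂ ιA)
    (hρ : ∀ X : EuclideanSpace ℂ ιA →ₗ[ℂ] EuclideanSpace ℂ ιA,
      LinearMap.trace ℂ _ (ρA ∘ₗ X) =
        LinearMap.trace ℂ _ ((projOf Y).toLinearMap ∘ₗ kron X LinearMap.id))
    (ε : ℝ) (hε : 0 < ε) :
    (Module.finrank ℂ (specSub ρA (Set.Ici ε)) : ℝ) ≤ (Module.finrank ℂ Y : ℝ) / ε ∧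
    ∃ V : Submodule ℂ (EuclideanSpace ℂ ιA),
      (Module.finrank ℂ V : ℝ) ≤ (Module.finrank ℂ Y : ℝ) / ε ∧
      Y.map (kron (projOf (specSub ρA (Set.Ici ε))).toLinearMap LinearMap.id) ≤
        extSub (κ := ιB) V := by
  set V := specSub ρA (Set.Ici ε) with hV
  have hQsym : LinearMap.IsSymmetric (kron (κ := ιB) (projOf V).toLinearMap LinearMap.id) :=
    (LinearMap.isSymmetric_iff_isSelfAdjoint _).2
      (LinearMap.isSelfAdjoint_iff'.2 (kron_proj_symm V))
  have hmain : ε * (Module.finrank ℂ V : ℝ) ≤ (Module.finrank ℂ Y : ℝ) := by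
    calc ε * (Module.finrank ℂ V : ℝ)
        ≤ (LinearMap.trace ℂ _ (ρA ∘ₗ (projOf V).toLinearMap)).re := stepA ρA ε
      _ = (LinearMap.trace ℂ _ ((projOf Y).toLinearMap
            ∘ₗ kron (projOf V).toLinearMap LinearMap.id)).re := by
          rw [hρ (projOf V).toLinearMap]
      _ ≤ (Module.finrank ℂ Y : ℝ) := stepC Y _ hQsym (kron_proj_idem V)
  have hdiv : (Module.finrank ℂ V : ℝ) ≤ (Module.finrank ℂ Y : ℝ) / ε := by
    rw [le_div_iff₀ hε]
    linarith [hmain]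
  refine ⟨hdiv, V, hdiv, ?_⟩
  rintro x ⟨y, _, rfl⟩
  exact kron_proj_mem V y
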